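/- Let m ∈ ℝ. The polynomial f_m = x⁴ + m·x² + 1 ∈ ℝ[x] is a sum of fourth powers of polynomials (i.e., there exist p₁, …, p_s ∈ ℝ[x] with f_m = p₁⁴ + ⋯ + p_s⁴) if and only if 0 ≤ m ≤ 6. -/
import Mathlib


open Polynomial

/-- For `m ∈ ℝ`, the polynomial `x⁴ + m·x² + 1 ∈ ℝ[x]` is a sum of
fourth powers of polynomials if and only if `0 ≤ m ≤ 6`. -/
theorem sum_of_fourth_powers_iff (m : ℝ) :
    (∃ (s : ℕ) (p : Fin s → Polynomial ℝ),
      (Polynomial.X : Polynomial ℝ) ^ 4 + Polynomial.C m * Polynomial.X ^ 2 + 1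
        = ∑ i, p i ^ 4) ↔ (0 ≤ m ∧ m ≤ 6) := by
  constructor
  · rintro ⟨s, p, h⟩
    -- all degrees ≤ 1
    have hdeg : ∀ i, (p i).natDegree ≤ 1 := by
      by_contra hc
      push_neg at hc
      obtain ⟨i0, hi0⟩ := hc
      set D := Finset.univ.sup (fun i => (p i).natDegree) with hD
      have hD2 : 2 ≤ D := le_trans hi0
        (Finset.le_sup (f := fun i => (p i).natDegree) (Finset.mem_univ i0))
      have hle : ∀ i, (p i).natDegree ≤ D := fun i =>
        Finset.le_sup (f := fun i => (p i).natDegree) (Finset.mem_univ i)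
      have hcoeff : ((∑ i, p i ^ 4).coeff (4 * D)) = ∑ i, ((p i).coeff D) ^ 4 := by
        rw [Polynomial.finset_sum_coeff]
        exact Finset.sum_congr rfl fun i _ => coeff_pow_of_natDegree_le (hle i)
      have hlhs : ((X : Polynomial ℝ) ^ 4 + C m * X ^ 2 + 1).coeff (4 * D) = 0 := by
        have h8 : 8 ≤ 4 * D := by omega
        simp only [coeff_add, coeff_X_pow, coeff_C_mul, coeff_one]
        rw [if_neg (by omega), if_neg (by omega), if_neg (by omega)]
        ring
      rw [h, hcoeff] at hlhs
      have hzero : ∀ i ∈ Finset.univ, ((p i).coeff D) ^ 4 = 0 := by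
        rw [← Finset.sum_eq_zero_iff_of_nonneg (fun i _ => by positivity)]
        exact hlhs
      obtain ⟨j, -, hj⟩ := Finset.exists_mem_eq_sup Finset.univ
        ⟨i0, Finset.mem_univ i0⟩ (fun i => (p i).natDegree)
      have hDj : D = (p j).natDegree := hD.trans hj
      have hpj : p j ≠ 0 := by
        intro h0
        rw [h0, natDegree_zero] at hDj
        omega
      have hne : (p j).coeff D ≠ 0 := by
        rw [hDj, Polynomial.coeff_natDegree]
        exact Polynomial.leadingCoeff_ne_zero.mpr hpj
      exact hne ((pow_eq_zero_iff (Nat.succ_ne_zero 3)).mp (hzero j (Finset.mem_univ j)))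
    set a : Fin s → ℝ := fun i => (p i).coeff 1 with ha
    set b : Fin s → ℝ := fun i => (p i).coeff 0 with hb
    have hp : ∀ i, p i = C (a i) * X + C (b i) := fun i =>
      eq_X_add_C_of_natDegree_le_one (hdeg i)
    have hexp : ∀ i, (p i) ^ 4 = C ((a i)^4) * X^4 + C (4*(a i)^3*(b i)) * X^3
        + C (6*(a i)^2*(b i)^2) * X^2 + C (4*(a i)*(b i)^3) * X + C ((b i)^4) := by
      intro i
      rw [hp i]
      simp only [map_pow, map_mul, map_ofNat]
      ring
    have key : ∀ k : ℕ, ((X : Polynomial ℝ) ^ 4 + C m * X ^ 2 + 1).coeff k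
        = ∑ i, ((p i)^4).coeff k := by
      intro k; rw [h, Polynomial.finset_sum_coeff]
    have eq4 : (1:ℝ) = ∑ i, (a i)^4 := by
      have := key 4
      simp only [coeff_add, coeff_X_pow, coeff_C_mul, coeff_one] at this
      norm_num at this
      rw [this]
      refine Finset.sum_congr rfl fun i _ => ?_
      rw [hexp i]
      simp only [coeff_add, coeff_C_mul, coeff_X_pow, coeff_X, coeff_C]
      norm_num
    have eq2 : m = ∑ i, 6*(a i)^2*(b i)^2 := by
      have := key 2
      simp only [coeff_add, coeff_X_pow, coeff_C_mul, coeff_one] at this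
      norm_num at this
      rw [this]
      refine Finset.sum_congr rfl fun i _ => ?_
      rw [hexp i]
      simp only [coeff_add, coeff_C_mul, coeff_X_pow, coeff_X, coeff_C]
      norm_num
    have eq0 : (1:ℝ) = ∑ i, (b i)^4 := by
      have := key 0
      simp only [coeff_add, coeff_X_pow, coeff_C_mul, coeff_one] at this
      norm_num at this
      rw [this]
      refine Finset.sum_congr rfl fun i _ => ?_
      rw [hexp i]
      simp only [coeff_add, coeff_C_mul, coeff_X_pow, coeff_X, coeff_C]
      norm_num
    constructor
    · rw [eq2]
      exact Finset.sum_nonneg fun i _ => by positivity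
    · have hbound : ∑ i, 6*(a i)^2*(b i)^2 ≤ ∑ i, (3*(a i)^4 + 3*(b i)^4) :=
        Finset.sum_le_sum fun i _ => by nlinarith [sq_nonneg ((a i)^2 - (b i)^2)]
      rw [eq2]
      calc ∑ i, 6*(a i)^2*(b i)^2 ≤ ∑ i, (3*(a i)^4 + 3*(b i)^4) := hbound
        _ = 3 * (∑ i, (a i)^4) + 3 * (∑ i, (b i)^4) := by
            rw [Finset.sum_add_distrib, Finset.mul_sum, Finset.mul_sum]
        _ = 6 := by rw [← eq4, ← eq0]; norm_num
  · rintro ⟨hm0, hm6⟩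
    set α : ℝ := m / 12 with hα
    set β : ℝ := 1 - m / 6 with hβ
    have hα0 : 0 ≤ α := by positivity
    have hβ0 : 0 ≤ β := by rw [hβ]; linarith
    set u : ℝ := Real.sqrt (Real.sqrt α) with hu
    set v : ℝ := Real.sqrt (Real.sqrt β) with hv
    have hu4 : u ^ 4 = α := by
      rw [hu, show (4:ℕ) = 2*2 from rfl, pow_mul, Real.sq_sqrt (Real.sqrt_nonneg _),
        Real.sq_sqrt hα0]
    have hv4 : v ^ 4 = β := by
      rw [hv, show (4:ℕ) = 2*2 from rfl, pow_mul, Real.sq_sqrt (Real.sqrt_nonneg _),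
        Real.sq_sqrt hβ0]
    refine ⟨4, ![C u * (X + 1), C u * (X - 1), C v * X, C v], ?_⟩
    rw [Fin.sum_univ_four]
    have hCu : (C u : Polynomial ℝ) ^ 4 = C α := by rw [← map_pow, hu4]
    have hCv : (C v : Polynomial ℝ) ^ 4 = C β := by rw [← map_pow, hv4]
    have hA : (C m : Polynomial ℝ) = 12 * C α := by
      rw [show m = 12 * α by rw [hα]; ring, map_mul, map_ofNat]
    have hB : (C β : Polynomial ℝ) = 1 - 2 * C α := by
      rw [show β = 1 - 2 * α by rw [hβ, hα]; ring, map_sub, map_mul, map_one, map_ofNat]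
    simp only [Matrix.cons_val_zero, Matrix.cons_val_one, Matrix.head_cons,
      Matrix.cons_val_two, Matrix.tail_cons, Matrix.cons_val_three, mul_pow, hCu, hCv]
    linear_combination X^2 * hA - (X^4 + 1) * hB
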